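/- Let 0 < α ≤ 1 and let γ : [0,1] → ℝⁿ be an α-Hölder curve with constant C_γ ≥ 1, i.e., |γ(x)−γ(y)| ≤ C_γ|x−y|^α for all x, y. Then there exists C = C(α, C_γ, n) > 0 such that Λ(B(γ([0,1]), r), r) ≤ C r^((α−1)/α) for all 0 < r < 1. -/

import Mathlib

open MeasureTheory Metric Set ENNReal

/-- Closed `r`-neighborhood of a set. -/
def nbhd {n : ℕ} (A : Set (EuclideanSpace ℝ (Fin n))) (r : ℝ) :
    Set (EuclideanSpace ℝ (Fin n)) :=
  {x | Metric.infDist x A ≤ r}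

/-- A rectifiable curve: continuous image of `[0,1]` with finite `H¹` measure. -/
def IsRectCurve {n : ℕ} (Γ : Set (EuclideanSpace ℝ (Fin n))) : Prop :=
  (∃ f : ℝ → EuclideanSpace ℝ (Fin n),
      ContinuousOn f (Set.Icc 0 1) ∧ Γ = f '' Set.Icc 0 1) ∧
    μH[1] Γ < ⊤

/-- The value of the Maximum Distance Problem. -/
noncomputable def MDP {n : ℕ} (E : Set (EuclideanSpace ℝ (Fin n))) (r : ℝ) : ℝ≥0∞ :=
  ⨅ (Γ : Set (EuclideanSpace ℝ (Fin n))) (_ : IsRectCurve Γ) (_ : E ⊆ nbhd Γ r), μH[1] Γ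

variable {E : Type*} [NormedAddCommGroup E] [NormedSpace ℝ E]

noncomputable def segPath (x y : E) : Path x y where
  toFun := fun t => x + (t : ℝ) • (y - x)
  continuous_toFun := by continuity
  source' := by simp
  target' := by simp

lemma segPath_range_subset (x y : E) : range (segPath x y) ⊆ segment ℝ x y := by
  rintro z ⟨t, rfl⟩
  rw [segment_eq_image']
  exact ⟨(t : ℝ), t.2, rfl⟩

noncomputable def polyPath (p : ℕ → E) : (M : ℕ) → Path (p 0) (p M)
  | 0 => Path.refl _
  | (M+1) => (polyPath p M).trans (segPath (p M) (p (M+1)))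

lemma polyPath_range_subset (p : ℕ → E) (M : ℕ) (hM : 1 ≤ M) :
    range (polyPath p M) ⊆ ⋃ m ∈ Finset.range M, segment ℝ (p m) (p (m+1)) := by
  induction M with
  | zero => omega
  | succ M ih =>
    show range ((polyPath p M).trans _) ⊆ _
    rw [Path.trans_range]
    apply union_subset
    · rcases Nat.eq_zero_or_pos M with h0 | h1
      · subst h0
        rintro z ⟨t, rfl⟩
        have : (polyPath p 0) t = p 0 := rfl
        rw [this]
        exact mem_biUnion (Finset.mem_range.2 (by omega)) (left_mem_segment ℝ _ _)
      · refine (ih h1).trans <| biUnion_subset_biUnion_left ?_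
        intro m hm
        have := Finset.mem_range.1 hm
        exact Finset.mem_range.2 (by omega)
    · exact (segPath_range_subset _ _).trans <| subset_biUnion_of_mem
        (u := fun m => segment ℝ (p m) (p (m+1))) (Finset.mem_range.2 (by omega))

lemma polyPath_mem (p : ℕ → E) (M m : ℕ) (h : m ≤ M) : p m ∈ range (polyPath p M) := by
  induction M with
  | zero =>
    have : m = 0 := Nat.le_zero.1 h
    subst this
    exact ⟨0, (polyPath p 0).source⟩
  | succ M ih =>
    show p m ∈ range ((polyPath p M).trans _)
    rw [Path.trans_range]
    rcases Nat.lt_or_ge m (M+1) with h1 | h1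
    · exact Or.inl (ih (by omega))
    · have : m = M + 1 := by omega
      subst this
      exact Or.inr ⟨1, (segPath _ _).target⟩

noncomputable def wpart (n : ℕ) (d : ℝ) (j : ℕ) : EuclideanSpace ℝ (Fin n) :=
  (if j % 4 = 1 then d else if j % 4 = 3 then -d else 0) •
    (if h : j / 4 < n then EuclideanSpace.single (⟨j / 4, h⟩ : Fin n) (1 : ℝ) else 0)

lemma norm_wpart_le (n : ℕ) {d : ℝ} (hd : 0 ≤ d) (j : ℕ) : ‖wpart n d j‖ ≤ d := by
  rw [wpart, norm_smul]
  have h2 : ‖(if h : j / 4 < n then EuclideanSpace.single (⟨j / 4, h⟩ : Fin n) (1 : ℝ) else 0)‖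
      ≤ 1 := by
    split
    · rw [EuclideanSpace.norm_single]; simp
    · simp
  have h1 : ‖(if j % 4 = 1 then d else if j % 4 = 3 then -d else 0)‖ ≤ d := by
    split
    · simp [Real.norm_eq_abs, abs_of_nonneg hd]
    · split
      · simp [Real.norm_eq_abs, abs_of_nonneg hd]
      · simpa using hd
  calc ‖_‖ * ‖_‖ ≤ d * 1 := mul_le_mul h1 h2 (norm_nonneg _) hd
  _ = d := mul_one d

lemma wpart_mod4_zero (n : ℕ) (d : ℝ) (j : ℕ) (h : j % 4 = 0) : wpart n d j = 0 := by
  rw [wpart]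
  have h1 : ¬ (j % 4 = 1) := by omega
  have h3 : ¬ (j % 4 = 3) := by omega
  rw [if_neg h1, if_neg h3, zero_smul]

lemma wpart_tip_pos (n : ℕ) (d : ℝ) (i : Fin n) :
    wpart n d (4 * i.val + 1) = d • EuclideanSpace.single i (1 : ℝ) := by
  rw [wpart]
  have hm : (4 * i.val + 1) % 4 = 1 := by omega
  have hdiv : (4 * i.val + 1) / 4 = i.val := by omega
  rw [if_pos hm]
  rw [dif_pos (show (4 * i.val + 1) / 4 < n by omega)]
  exact congrArg (fun z : Fin n => d • EuclideanSpace.single z (1 : ℝ)) (Fin.ext hdiv)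

lemma wpart_tip_neg (n : ℕ) (d : ℝ) (i : Fin n) :
    wpart n d (4 * i.val + 3) = (-d) • EuclideanSpace.single i (1 : ℝ) := by
  rw [wpart]
  have hm1 : ¬ ((4 * i.val + 3) % 4 = 1) := by omega
  have hm : (4 * i.val + 3) % 4 = 3 := by omega
  have hdiv : (4 * i.val + 3) / 4 = i.val := by omega
  rw [if_neg hm1, if_pos hm]
  rw [dif_pos (show (4 * i.val + 3) / 4 < n by omega)]
  exact congrArg (fun z : Fin n => (-d) • EuclideanSpace.single z (1 : ℝ)) (Fin.ext hdiv)



set_option maxHeartbeats 2000000 in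
theorem holder_upper_bound {n : ℕ} (α : ℝ) (hα₀ : 0 < α) (hα₁ : α ≤ 1)
    (Cγ : ℝ) (hC : 1 ≤ Cγ) (γ : ℝ → EuclideanSpace ℝ (Fin n))
    (hγ : ∀ x ∈ Set.Icc (0:ℝ) 1, ∀ y ∈ Set.Icc (0:ℝ) 1,
      dist (γ x) (γ y) ≤ Cγ * |x - y| ^ α) :
    ∃ C : ℝ, 0 < C ∧ ∀ r : ℝ, 0 < r → r < 1 →
      MDP (nbhd (γ '' Set.Icc 0 1) r) r ≤ ENNReal.ofReal (C * r ^ ((α - 1) / α)) := by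
  have hαne : α ≠ 0 := ne_of_gt hα₀
  have hCpos : (0:ℝ) < Cγ := lt_of_lt_of_le one_pos hC
  set A : ℝ := (Cγ * (4 * (n:ℝ) + 1)) ^ (1/α : ℝ) with hAdef
  have hA0 : (0:ℝ) < Cγ * (4 * (n:ℝ) + 1) := by positivity
  have hApos : 0 < A := Real.rpow_pos_of_pos hA0 _
  have hsq : (0:ℝ) ≤ Real.sqrt n := Real.sqrt_nonneg _
  refine ⟨3 * (1 + 4 * Real.sqrt n) * A, by positivity, ?_⟩
  intro r hr hr1
  -- continuity of γ on [0,1]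
  have hγc : ContinuousOn γ (Set.Icc 0 1) := by
    rw [Metric.continuousOn_iff]
    intro b hb ε hε
    refine ⟨(ε / (2 * Cγ)) ^ (1/α : ℝ), by positivity, ?_⟩
    intro a ha hab
    have h1 : dist (γ a) (γ b) ≤ Cγ * |a - b| ^ (α:ℝ) := hγ a ha b hb
    have h2 : |a - b| ^ (α:ℝ) ≤ ((ε / (2*Cγ)) ^ (1/α:ℝ)) ^ (α:ℝ) := by
      apply Real.rpow_le_rpow (abs_nonneg _) _ (le_of_lt hα₀)
      rw [Real.dist_eq] at hab; exact le_of_lt hab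
    have h3 : ((ε / (2*Cγ)) ^ (1/α:ℝ)) ^ (α:ℝ) = ε / (2*Cγ) := by
      rw [← Real.rpow_mul (by positivity), one_div_mul_cancel hαne, Real.rpow_one]
    have h4 : Cγ * (ε/(2*Cγ)) = ε/2 := by field_simp
    rw [h3] at h2
    have h5 : Cγ * |a - b| ^ (α:ℝ) ≤ ε/2 := by
      rw [← h4]; exact mul_le_mul_of_nonneg_left h2 (le_of_lt hCpos)
    linarith
  -- parameters
  set δ : ℝ := r / (4 * (n:ℝ) + 1) with hδdef
  have hδpos : 0 < δ := by positivity
  have hδr : (4 * (n:ℝ) + 1) * δ = r := by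
    rw [hδdef]; field_simp
  set d : ℝ := 2 * Real.sqrt n * δ with hddef
  have hd0 : 0 ≤ d := by positivity
  set β : ℝ := (Cγ * (4 * (n:ℝ) + 1) / r) ^ (1/α : ℝ) with hβdef
  have hbase1 : 1 ≤ Cγ * (4 * (n:ℝ) + 1) / r := by
    rw [le_div_iff₀ hr]
    nlinarith [Nat.cast_nonneg (α := ℝ) n]
  have hβ1 : 1 ≤ β := Real.one_le_rpow hbase1 (by positivity)
  have hβpos : 0 < β := lt_of_lt_of_le one_pos hβ1
  set N : ℕ := ⌈β⌉₊ with hNdef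
  have hN1 : 1 ≤ N := by
    rw [hNdef]; exact Nat.ceil_pos.2 hβpos
  have hNpos : (0:ℝ) < N := by
    have h0 : 0 < N := hN1
    exact_mod_cast h0
  have hβN : β ≤ N := Nat.le_ceil β
  have hN3β : (N:ℝ) + 1 ≤ 3 * β := by
    have := Nat.ceil_lt_add_one (le_of_lt hβpos)
    rw [← hNdef] at this
    nlinarith
  -- the sampling step bound
  have hNα : Cγ * (4 * (n:ℝ) + 1) / r ≤ (N:ℝ) ^ (α : ℝ) := by
    calc Cγ * (4 * (n:ℝ) + 1) / r
        = (Cγ * (4 * (n:ℝ) + 1) / r) ^ ((1/α) * α) := by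
          rw [one_div_mul_cancel hαne, Real.rpow_one]
      _ = β ^ (α:ℝ) := by rw [Real.rpow_mul (by positivity), ← hβdef]
      _ ≤ (N:ℝ) ^ (α:ℝ) := Real.rpow_le_rpow (le_of_lt hβpos) hβN (le_of_lt hα₀)
  have hstepN : Cγ * ((1:ℝ)/N) ^ (α:ℝ) ≤ δ := by
    have hNαpos : (0:ℝ) < (N:ℝ) ^ (α:ℝ) := Real.rpow_pos_of_pos hNpos _
    rw [one_div, Real.inv_rpow (le_of_lt hNpos), ← div_eq_mul_inv, div_le_iff₀ hNαpos]
    calc Cγ = δ * (Cγ * (4 * (n:ℝ) + 1) / r) := by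
          rw [hδdef]; field_simp
      _ ≤ δ * (N:ℝ) ^ (α:ℝ) := mul_le_mul_of_nonneg_left hNα (le_of_lt hδpos)
  -- the sequence of vertices
  set t : ℕ → ℝ := fun k => ((min k N : ℕ) : ℝ) / N with htdef
  have htk : ∀ k, t k = ((min k N : ℕ) : ℝ) / N := fun _ => rfl
  have htmem : ∀ k, t k ∈ Set.Icc (0:ℝ) 1 := by
    intro k
    rw [htk]
    constructor
    · positivity
    · rw [div_le_one hNpos]
      exact_mod_cast Nat.cast_le.2 (min_le_right k N)
  set p : ℕ → EuclideanSpace ℝ (Fin n) := fun m =>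
    γ (t (m / (4 * n + 1))) + wpart n d (m % (4 * n + 1)) with hpdef
  have hpm : ∀ m, p m = γ (t (m / (4 * n + 1))) + wpart n d (m % (4 * n + 1)) :=
    fun _ => rfl
  set M : ℕ := (N + 1) * (4 * n + 1) with hMdef
  have hM1 : 1 ≤ M := by
    rw [hMdef]; exact Nat.one_le_iff_ne_zero.2 (Nat.mul_ne_zero (by omega) (by omega))
  -- step distance bound for γ ∘ t
  have hb : ∀ k k' : ℕ, k ≤ k' → k' ≤ k + 1 → dist (γ (t k)) (γ (t k')) ≤ δ := by
    intro k k' h1 h2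
    have habs : |t k - t k'| ≤ 1 / N := by
      have hm1 : min k N ≤ min k' N := by omega
      have hm2 : min k' N ≤ min k N + 1 := by omega
      have e1 : t k' - t k = (((min k' N : ℕ):ℝ) - ((min k N : ℕ):ℝ))/(N:ℝ) := by
        rw [htk, htk]; ring
      rw [abs_sub_comm, e1, abs_of_nonneg (div_nonneg (sub_nonneg.2 (by exact_mod_cast hm1))
        (le_of_lt hNpos))]
      rw [div_le_div_iff₀ hNpos hNpos]
      have hcast : ((min k' N : ℕ):ℝ) ≤ ((min k N : ℕ):ℝ) + 1 := by exact_mod_cast hm2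
      nlinarith
    calc dist (γ (t k)) (γ (t k')) ≤ Cγ * |t k - t k'| ^ (α:ℝ) := hγ _ (htmem k) _ (htmem k')
      _ ≤ Cγ * ((1:ℝ)/N) ^ (α:ℝ) := by
          apply mul_le_mul_of_nonneg_left _ (le_of_lt hCpos)
          exact Real.rpow_le_rpow (abs_nonneg _) habs (le_of_lt hα₀)
      _ ≤ δ := hstepN
  have hpstep : ∀ m : ℕ, dist (p m) (p (m + 1)) ≤ δ + 2 * d := by
    intro m
    have hq0 : 0 < 4 * n + 1 := by omega
    have hk1 : m / (4*n+1) ≤ (m + 1) / (4*n+1) := Nat.div_le_div_right (by omega)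
    have hk2 : (m + 1) / (4*n+1) ≤ m / (4*n+1) + 1 := by
      calc (m + 1) / (4*n+1) ≤ (m + (4*n+1)) / (4*n+1) := Nat.div_le_div_right (by omega)
        _ = m / (4*n+1) + 1 := Nat.add_div_right m hq0
    have hsplit : dist (p m) (p (m+1)) ≤
        dist (γ (t (m / (4*n+1)))) (γ (t ((m+1) / (4*n+1))))
          + ‖wpart n d (m % (4*n+1))‖ + ‖wpart n d ((m+1) % (4*n+1))‖ := by
      rw [hpm, hpm, dist_eq_norm]
      have e : γ (t (m / (4*n+1))) + wpart n d (m % (4*n+1))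
            - (γ (t ((m+1) / (4*n+1))) + wpart n d ((m+1) % (4*n+1)))
          = ((γ (t (m / (4*n+1))) - γ (t ((m+1) / (4*n+1)))) + wpart n d (m % (4*n+1)))
            + -(wpart n d ((m+1) % (4*n+1))) := by abel
      rw [e]
      calc ‖_ + _‖ ≤ ‖(γ (t (m / (4*n+1))) - γ (t ((m+1) / (4*n+1)))) + wpart n d (m % (4*n+1))‖
            + ‖-(wpart n d ((m+1) % (4*n+1)))‖ := norm_add_le _ _
        _ ≤ _ := by
            rw [norm_neg]
            have h5 := norm_add_le (γ (t (m / (4*n+1))) - γ (t ((m+1) / (4*n+1))))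
              (wpart n d (m % (4*n+1)))
            rw [← dist_eq_norm] at h5
            linarith
    calc dist (p m) (p (m+1)) ≤ _ := hsplit
      _ ≤ δ + d + d := by
          have h1 := hb (m / (4*n+1)) ((m+1) / (4*n+1)) hk1 hk2
          have h2 := norm_wpart_le n hd0 (m % (4*n+1))
          have h3 := norm_wpart_le n hd0 ((m+1) % (4*n+1))
          linarith
      _ = δ + 2*d := by ring
  -- the curve
  set Γ : Set (EuclideanSpace ℝ (Fin n)) := Set.range (polyPath p M) with hΓdef
  have hΓim : (polyPath p M).extend '' Set.Icc 0 1 = Γ := by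
    apply subset_antisymm
    · rintro z ⟨u, hu, rfl⟩
      rw [Path.extend_apply _ hu]
      exact mem_range_self _
    · rintro z ⟨u, rfl⟩
      exact ⟨u, u.2, Path.extend_extends' _ u⟩
  have hμΓ : μH[1] Γ ≤ ENNReal.ofReal ((M:ℝ) * (δ + 2*d)) := by
    calc μH[1] Γ ≤ μH[1] (⋃ m ∈ Finset.range M, segment ℝ (p m) (p (m+1))) :=
          measure_mono (polyPath_range_subset p M hM1)
      _ ≤ ∑ m ∈ Finset.range M, μH[1] (segment ℝ (p m) (p (m+1))) :=
          measure_biUnion_finset_le _ _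
      _ ≤ ∑ _m ∈ Finset.range M, ENNReal.ofReal (δ + 2*d) := by
          apply Finset.sum_le_sum
          intro m _
          rw [hausdorffMeasure_segment, edist_dist]
          exact ENNReal.ofReal_le_ofReal (hpstep m)
      _ = (M : ℝ≥0∞) * ENNReal.ofReal (δ + 2*d) := by
          rw [Finset.sum_const, Finset.card_range, nsmul_eq_mul]
      _ = ENNReal.ofReal ((M:ℝ) * (δ + 2*d)) := by
          rw [ENNReal.ofReal_mul (by positivity : (0:ℝ) ≤ (M:ℝ)), ENNReal.ofReal_natCast]
  have hrect : IsRectCurve Γ := by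
    constructor
    · exact ⟨(polyPath p M).extend, (Path.continuous_extend _).continuousOn, hΓim.symm⟩
    · exact lt_of_le_of_lt hμΓ ENNReal.ofReal_lt_top
  -- coverage
  have hcov : nbhd (γ '' Set.Icc 0 1) r ⊆ nbhd Γ r := by
    intro x hx
    have hx' : infDist x (γ '' Set.Icc 0 1) ≤ r := hx
    have hFc : IsCompact (γ '' Set.Icc 0 1) := isCompact_Icc.image_of_continuousOn hγc
    have hFne : (γ '' Set.Icc 0 1).Nonempty :=
      ⟨γ 0, Set.mem_image_of_mem _ (by norm_num : (0:ℝ) ∈ Set.Icc (0:ℝ) 1)⟩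
    obtain ⟨y, hyF, hxy⟩ := hFc.exists_infDist_eq_dist hFne x
    obtain ⟨t₀, ht₀, rfl⟩ := hyF
    have hdxy : dist x (γ t₀) ≤ r := by rw [← hxy]; exact hx'
    set k : ℕ := ⌊t₀ * N⌋₊ with hkdef
    have hkN : k ≤ N := by
      have h1 : t₀ * N ≤ (N:ℝ) := by nlinarith [ht₀.1, ht₀.2]
      rw [hkdef]
      calc ⌊t₀ * (N:ℝ)⌋₊ ≤ ⌊((N:ℕ):ℝ)⌋₊ := Nat.floor_le_floor h1
        _ = N := Nat.floor_natCast N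
    have htkk : t k = (k:ℝ) / N := by
      rw [htk, min_eq_left hkN]
    have hfl1 : ((k:ℕ):ℝ) ≤ t₀ * N := Nat.floor_le (by nlinarith [ht₀.1])
    have hfl2 : t₀ * N < (k:ℝ) + 1 := Nat.lt_floor_add_one (t₀ * N)
    have hdc : dist (γ t₀) (γ (t k)) ≤ δ := by
      have h1 : |t₀ - t k| ≤ 1/N := by
        rw [htkk]
        have hk0 : 0 ≤ t₀ - (k:ℝ)/N := by
          rw [sub_nonneg, div_le_iff₀ hNpos]
          exact hfl1
        rw [abs_of_nonneg hk0, sub_le_iff_le_add, ← add_div, le_div_iff₀ hNpos]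
        linarith [hfl2]
      calc dist (γ t₀) (γ (t k)) ≤ Cγ * |t₀ - t k| ^ (α:ℝ) := hγ _ ht₀ _ (htmem k)
        _ ≤ Cγ * ((1:ℝ)/N) ^ (α:ℝ) := by
            apply mul_le_mul_of_nonneg_left _ (le_of_lt hCpos)
            exact Real.rpow_le_rpow (abs_nonneg _) h1 (le_of_lt hα₀)
        _ ≤ δ := hstepN
    set c := γ (t k) with hcdef
    have hs1 : dist x c ≤ r + δ := by
      calc dist x c ≤ dist x (γ t₀) + dist (γ t₀) c := dist_triangle _ _ _
        _ ≤ r + δ := add_le_add hdxy hdc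
    rcases le_or_gt (dist x c) r with hsr | hsr
    · have hceq : p ((4*n+1) * k) = c := by
        rw [hpm]
        have h1 : ((4*n+1) * k) / (4*n+1) = k := Nat.mul_div_cancel_left k (by omega)
        have h2 : ((4*n+1) * k) % (4*n+1) = 0 := Nat.mul_mod_right _ _
        rw [h1, h2, wpart_mod4_zero n d 0 rfl, add_zero, hcdef]
      have hcmem : c ∈ Γ := by
        rw [hΓdef, ← hceq]
        apply polyPath_mem
        calc (4*n+1) * k ≤ (4*n+1) * (N+1) := Nat.mul_le_mul_left _ (by omega)
          _ = M := by rw [hMdef]; ring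
      exact le_trans (infDist_le_dist_of_mem hcmem) hsr
    · -- tip case
      have hS : (dist x c)^2 = ∑ l, (x l - c l)^2 := by
        rw [EuclideanSpace.dist_eq, Real.sq_sqrt (by positivity)]
        exact Finset.sum_congr rfl fun l _ => by rw [Real.dist_eq, sq_abs]
      have hn0 : 0 < n := by
        by_contra hn
        have hn' : n = 0 := by omega
        subst hn'
        rw [Finset.univ_eq_empty, Finset.sum_empty] at hS
        nlinarith [dist_nonneg (x := x) (y := c)]
      have hn1r : (1:ℝ) ≤ (n:ℝ) := by exact_mod_cast hn0
      have hex : ∃ i : Fin n, (dist x c)^2 / n ≤ (x i - c i)^2 := by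
        by_contra hcon
        push_neg at hcon
        have hne : (Finset.univ : Finset (Fin n)).Nonempty := ⟨⟨0, hn0⟩, Finset.mem_univ _⟩
        have hlt : ∑ l, (x l - c l)^2 < ∑ _l : Fin n, (dist x c)^2 / n :=
          Finset.sum_lt_sum_of_nonempty hne (fun l _ => hcon l)
        rw [Finset.sum_const, Finset.card_univ, Fintype.card_fin, nsmul_eq_mul, ← hS] at hlt
        have he : (n:ℝ) * ((dist x c)^2 / n) = (dist x c)^2 := by field_simp
        nlinarith
      obtain ⟨i, hi⟩ := hex
      set v : ℝ := x i - c i with hvdef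
      set a : ℝ := if 0 ≤ v then d else -d with hadef
      set j : ℕ := if 0 ≤ v then 4*i.val + 1 else 4*i.val + 3 with hjdef
      have hwj : wpart n d j = a • EuclideanSpace.single i (1:ℝ) := by
        rw [hjdef, hadef]
        split
        · exact wpart_tip_pos n d i
        · exact wpart_tip_neg n d i
      have hjlt : j < 4*n + 1 := by
        rw [hjdef]; have := i.2; split <;> omega
      have hpm_eq : p ((4*n+1) * k + j) = c + a • EuclideanSpace.single i (1:ℝ) := by
        rw [hpm]
        have h1 : ((4*n+1) * k + j) / (4*n+1) = k := by
          rw [Nat.mul_add_div (by omega), Nat.div_eq_of_lt hjlt, add_zero]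
        have h2 : ((4*n+1) * k + j) % (4*n+1) = j := by
          rw [Nat.mul_add_mod, Nat.mod_eq_of_lt hjlt]
        rw [h1, h2, hwj, hcdef]
      have hmemΓ : c + a • EuclideanSpace.single i (1:ℝ) ∈ Γ := by
        rw [hΓdef, ← hpm_eq]
        apply polyPath_mem
        have h3 : (4*n+1) * k ≤ (4*n+1) * N := Nat.mul_le_mul_left _ hkN
        have h4 : M = (4*n+1) * N + (4*n+1) := by rw [hMdef]; ring
        omega
      have havd : 2 * δ * dist x c ≤ a * v := by
        have h1 : a * v = d * |v| := by
          rw [hadef]; split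
          · rw [abs_of_nonneg ‹_›]
          · rw [abs_of_neg (lt_of_not_ge ‹_›)]; ring
        have hsqrtn : (0:ℝ) < Real.sqrt n := Real.sqrt_pos.2 (by exact_mod_cast hn0)
        have h2 : dist x c / Real.sqrt n ≤ |v| := by
          have e : Real.sqrt ((dist x c)^2 / n) = dist x c / Real.sqrt n := by
            rw [Real.sqrt_div (sq_nonneg _), Real.sqrt_sq dist_nonneg]
          have := Real.sqrt_le_sqrt hi
          rw [e, Real.sqrt_sq_eq_abs] at this
          exact this
        have h3 : d * (dist x c / Real.sqrt n) = 2 * δ * dist x c := by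
          rw [hddef]
          field_simp
        rw [h1, ← h3]
        exact mul_le_mul_of_nonneg_left h2 hd0
      have hsum : (dist x (c + a • EuclideanSpace.single i (1:ℝ)))^2
          = (dist x c)^2 - 2*a*v + a^2 := by
        rw [EuclideanSpace.dist_eq, Real.sq_sqrt (by positivity)]
        have hqa : ∀ l, (c + a • EuclideanSpace.single i (1:ℝ)) l
            = c l + a * (if l = i then 1 else 0) := by
          intro l
          simp [EuclideanSpace.single_apply]
        have h1 : ∀ l ∈ Finset.univ,
            dist (x l) ((c + a • EuclideanSpace.single i (1:ℝ)) l) ^ 2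
            = (x l - c l)^2 - (if l = i then 2*a*(x l - c l) - a^2 else 0) := by
          intro l _
          rw [Real.dist_eq, sq_abs, hqa l]
          split <;> ring
        rw [Finset.sum_congr rfl h1, Finset.sum_sub_distrib,
          Finset.sum_ite_eq' Finset.univ i (fun l => 2*a*(x l - c l) - a^2),
          if_pos (Finset.mem_univ i), ← hS, ← hvdef]
        ring
      have ha2 : a^2 = 4*(n:ℝ)*δ^2 := by
        have h0 : a^2 = d^2 := by rw [hadef]; split <;> ring
        rw [h0, hddef, mul_pow, mul_pow, Real.sq_sqrt (show (0:ℝ) ≤ (n:ℝ) by positivity)]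
        ring
      have hδ2 : 4*(n:ℝ)*δ^2 = r*δ - δ^2 := by rw [← hδr]; ring
      have hle2 : (dist x (c + a • EuclideanSpace.single i (1:ℝ)))^2 ≤ r^2 := by
        rw [hsum]
        have hx1 : (dist x c)^2 ≤ (r + δ) * dist x c := by
          rw [pow_two]
          exact mul_le_mul_of_nonneg_right hs1 dist_nonneg
        have hr3δ : 0 ≤ r - 3*δ := by
          have h6 : 0 ≤ (4*(n:ℝ) - 2) * δ := mul_nonneg (by linarith only [hn1r]) hδpos.le
          linarith only [hδr, h6]
        have hx2 : (r - 3*δ) * dist x c ≤ (r - 3*δ) * (r + δ) :=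
          mul_le_mul_of_nonneg_left hs1 hr3δ
        linarith only [hx1, hx2, havd, ha2, hδ2, mul_nonneg hr.le hδpos.le, sq_nonneg δ]
      have hfin : dist x (c + a • EuclideanSpace.single i (1:ℝ)) ≤ r := by
        have h7 := Real.sqrt_le_sqrt hle2
        rwa [Real.sqrt_sq dist_nonneg, Real.sqrt_sq hr.le] at h7
      exact le_trans (infDist_le_dist_of_mem hmemΓ) hfin
  -- conclusion
  have hMDP : MDP (nbhd (γ '' Set.Icc 0 1) r) r ≤ μH[1] Γ := by
    refine iInf_le_of_le Γ ?_
    rw [iInf_pos hrect, iInf_pos hcov]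
  refine le_trans hMDP (le_trans hμΓ (ENNReal.ofReal_le_ofReal ?_))
  have hAR : β * r = A * r ^ ((α-1)/α : ℝ) := by
    have hexp : (α-1)/α = 1 - (1/α) := by field_simp
    have hrp : (0:ℝ) < r ^ (1/α : ℝ) := Real.rpow_pos_of_pos hr _
    rw [hexp, Real.rpow_sub hr, Real.rpow_one, hβdef, hAdef,
      Real.div_rpow (by positivity) (le_of_lt hr)]
    field_simp
  have hM' : (M:ℝ) = ((N:ℝ)+1) * (4*(n:ℝ)+1) := by rw [hMdef]; push_cast; ring
  calc (M:ℝ) * (δ + 2*d) = ((N:ℝ)+1) * ((4*(n:ℝ)+1)*δ) * (1 + 4*Real.sqrt n) := by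
        rw [hM', hddef]; ring
    _ = ((N:ℝ)+1) * r * (1 + 4*Real.sqrt n) := by rw [hδr]
    _ ≤ (3*β) * r * (1 + 4*Real.sqrt n) :=
        mul_le_mul_of_nonneg_right (mul_le_mul_of_nonneg_right hN3β (le_of_lt hr)) (by positivity)
    _ = 3*(1+4*Real.sqrt n)*(β*r) := by ring
    _ = 3*(1+4*Real.sqrt n)*A * r^((α-1)/α : ℝ) := by rw [hAR]; ring
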